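/- Let f_0,…,f_m be monomials of the same degree d in k[x_0,…,x_n] satisfying the canonical restrictions (no common variable divides all of them, and every variable occurs in some f_j). Let f̂_j = x^α/f_j be the Newton complementary dual monomials, where α_i = max_j (exponent of x_i in f_j). Then the identity map on the polynomial ring k[y_0,…,y_m] induces a k-algebra isomorphism k[f_0,…,f_m] ≅ k[f̂_0,…,f̂_m] (sending f_j to f̂_j). -/

import Mathlib

open MvPolynomial

/-- The additive monoid hom on exponent vectors induced by a matrix of exponents. -/
noncomputable def expMap {m n : ℕ} (a : Fin (m + 1) → Fin (n + 1) → ℕ) :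
    (Fin (m + 1) →₀ ℕ) →+ (Fin (n + 1) →₀ ℕ) where
  toFun u := Finsupp.equivFunOnFinite.symm fun i => ∑ j, u j * a j i
  map_zero' := by ext i; simp
  map_add' u v := by ext i; simp [add_mul, Finset.sum_add_distrib]

lemma expMap_apply {m n : ℕ} (a : Fin (m + 1) → Fin (n + 1) → ℕ)
    (u : Fin (m + 1) →₀ ℕ) (i : Fin (n + 1)) :
    expMap a u i = ∑ j, u j * a j i := rfl

lemma expMap_single {m n : ℕ} (a : Fin (m + 1) → Fin (n + 1) → ℕ) (j : Fin (m + 1)) :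
    expMap a (Finsupp.single j 1) = Finsupp.equivFunOnFinite.symm (a j) := by
  ext i
  show (∑ j', (Finsupp.single j 1 : Fin (m+1) →₀ ℕ) j' * a j' i) = a j i
  simp [Finsupp.single_apply]

lemma aeval_eq_mapDomain {k : Type*} [CommSemiring k] {m n : ℕ}
    (D : (Fin (m + 1) →₀ ℕ) →+ (Fin (n + 1) →₀ ℕ))
    (f : Fin (m + 1) → MvPolynomial (Fin (n + 1)) k)
    (hf : ∀ j, f j = monomial (D (Finsupp.single j 1)) 1)
    (p : MvPolynomial (Fin (m + 1)) k) :
    aeval f p = AddMonoidAlgebra.mapDomain D p := by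
  have : (aeval f : MvPolynomial (Fin (m + 1)) k →ₐ[k] MvPolynomial (Fin (n + 1)) k)
      = AddMonoidAlgebra.mapDomainAlgHom k k D := by
    apply MvPolynomial.algHom_ext
    intro j
    rw [aeval_X, hf j]
    show _ = AddMonoidAlgebra.mapDomain D (AddMonoidAlgebra.single (Finsupp.single j 1) 1)
    rw [AddMonoidAlgebra.mapDomain_single, MvPolynomial.single_eq_monomial]
  rw [this]
  rfl

/-- for monomials `f_j` of common degree `d` satisfying the canonical
restrictions, with Newton complementary duals `f̂_j = x^α/f_j`, the identity map of
`k[y_0,…,y_m]` induces a `k`-algebra isomorphism `k[f] ≅ k[f̂]`; equivalently, the kernels of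
the evaluation maps `y_j ↦ f_j` and `y_j ↦ f̂_j` coincide. -/
theorem dual_monomials_same_kernel
    {k : Type*} [Field k] {n m d : ℕ}
    (a : Fin (m + 1) → Fin (n + 1) → ℕ)
    (hdeg : ∀ j, ∑ i, a j i = d)
    (hnofix : ∀ i, ∃ j, a j i = 0)
    (hall : ∀ i, ∃ j, a j i ≠ 0)
    (α : Fin (n + 1) → ℕ) (hα : ∀ i, α i = Finset.univ.sup fun j => a j i)
    (f fhat : Fin (m + 1) → MvPolynomial (Fin (n + 1)) k)
    (hf : ∀ j, f j = monomial (Finsupp.equivFunOnFinite.symm (a j)) (1 : k))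
    (hfhat : ∀ j, fhat j =
      monomial (Finsupp.equivFunOnFinite.symm fun i => α i - a j i) (1 : k)) :
    RingHom.ker (MvPolynomial.aeval f :
        MvPolynomial (Fin (m + 1)) k →ₐ[k] MvPolynomial (Fin (n + 1)) k) =
      RingHom.ker (MvPolynomial.aeval fhat :
        MvPolynomial (Fin (m + 1)) k →ₐ[k] MvPolynomial (Fin (n + 1)) k) := by
  classical
  set D := expMap a with hD
  set Dh := expMap (fun j i => α i - a j i) with hDh
  -- basic inequalities
  have hαa : ∀ j i, a j i ≤ α i := by
    intro j i; rw [hα i]; exact Finset.le_sup (f := fun j => a j i) (Finset.mem_univ j)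
  have hd : 0 < d := by
    obtain ⟨j, hj⟩ := hall 0
    have h1 : a j 0 ≤ ∑ i, a j i :=
      Finset.single_le_sum (fun i _ => Nat.zero_le _) (Finset.mem_univ 0)
    rw [hdeg j] at h1
    omega
  have hsumα : d < ∑ i, α i := by
    by_contra h
    push_neg at h
    obtain ⟨j0, hj0⟩ := hnofix 0
    have hle : ∀ i ∈ Finset.univ, a j0 i ≤ α i := fun i _ => hαa j0 i
    have hsum : ∑ i, a j0 i = ∑ i, α i :=
      le_antisymm (Finset.sum_le_sum hle) (by rw [hdeg j0]; exact h)
    have h1 : α 0 = 0 := by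
      have := (Finset.sum_eq_sum_iff_of_le hle).mp hsum 0 (Finset.mem_univ 0)
      omega
    obtain ⟨j1, hj1⟩ := hall 0
    have := hαa j1 0
    omega
  set dh : ℕ := (∑ i, α i) - d with hdhdef
  have hdh : 0 < dh := by omega
  have hahsum : ∀ j, ∑ i, (α i - a j i) = dh := by
    intro j
    rw [Finset.sum_tsub_distrib Finset.univ (fun i _ => hαa j i), hdeg j]
  -- degree computations
  have hdegD : ∀ u : Fin (m + 1) →₀ ℕ, ∑ i, D u i = (∑ j, u j) * d := by
    intro u
    simp only [hD, expMap_apply]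
    rw [Finset.sum_comm, Finset.sum_mul]
    exact Finset.sum_congr rfl fun j _ => by rw [← Finset.mul_sum, hdeg j]
  have hdegDh : ∀ u : Fin (m + 1) →₀ ℕ, ∑ i, Dh u i = (∑ j, u j) * dh := by
    intro u
    simp only [hDh, expMap_apply]
    rw [Finset.sum_comm, Finset.sum_mul]
    exact Finset.sum_congr rfl fun j _ => by rw [← Finset.mul_sum, hahsum j]
  have hDle : ∀ (u : Fin (m + 1) →₀ ℕ) i, D u i ≤ (∑ j, u j) * α i := by
    intro u i
    rw [hD, expMap_apply, Finset.sum_mul]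
    exact Finset.sum_le_sum fun j _ => Nat.mul_le_mul_left _ (hαa j i)
  have hDhD : ∀ (u : Fin (m + 1) →₀ ℕ) i, Dh u i = (∑ j, u j) * α i - D u i := by
    intro u i
    rw [hDh, hD, expMap_apply, expMap_apply]
    calc ∑ j, u j * (α i - a j i) = ∑ j, (u j * α i - u j * a j i) :=
          Finset.sum_congr rfl fun j _ => Nat.mul_sub ..
      _ = (∑ j, u j * α i) - ∑ j, u j * a j i :=
          Finset.sum_tsub_distrib Finset.univ
            (fun j _ => Nat.mul_le_mul_left _ (hαa j i))
      _ = (∑ j, u j) * α i - ∑ j, u j * a j i := by rw [Finset.sum_mul]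
  -- the two "complement" maps on exponents
  set T : (Fin (n + 1) →₀ ℕ) → (Fin (n + 1) →₀ ℕ) :=
    fun e => Finsupp.equivFunOnFinite.symm fun i => (∑ i', e i') / d * α i - e i with hT
  set Th : (Fin (n + 1) →₀ ℕ) → (Fin (n + 1) →₀ ℕ) :=
    fun e => Finsupp.equivFunOnFinite.symm fun i => (∑ i', e i') / dh * α i - e i with hTh
  have hTD : ∀ u, T (D u) = Dh u := by
    intro u
    ext i
    show (∑ i', D u i') / d * α i - D u i = Dh u i
    rw [hdegD u, Nat.mul_div_cancel _ hd, hDhD u i]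
  have hThDh : ∀ u, Th (Dh u) = D u := by
    intro u
    ext i
    show (∑ i', Dh u i') / dh * α i - Dh u i = D u i
    rw [hdegDh u, Nat.mul_div_cancel _ hdh, hDhD u i, Nat.sub_sub_self (hDle u i)]
  -- rewrite both evaluations as mapDomain
  have hf' : ∀ j, f j = monomial (D (Finsupp.single j 1)) 1 := by
    intro j; rw [hf j, hD, expMap_single]
  have hfh' : ∀ j, fhat j = monomial (Dh (Finsupp.single j 1)) 1 := by
    intro j; rw [hfhat j, hDh, expMap_single]
  ext p
  simp only [RingHom.mem_ker]
  rw [aeval_eq_mapDomain D f hf' p, aeval_eq_mapDomain Dh fhat hfh' p]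
  constructor
  · intro h
    have hc : (T ∘ ⇑D) = ⇑Dh := funext hTD
    calc AddMonoidAlgebra.mapDomain (⇑Dh) p = AddMonoidAlgebra.mapDomain (T ∘ ⇑D) p := by rw [hc]
      _ = AddMonoidAlgebra.mapDomain T (AddMonoidAlgebra.mapDomain (⇑D) p) := by
          exact congrArg AddMonoidAlgebra.ofCoeff Finsupp.mapDomain_comp
      _ = 0 := by rw [h, AddMonoidAlgebra.mapDomain_zero]
  · intro h
    have hc : (Th ∘ ⇑Dh) = ⇑D := funext hThDh
    calc AddMonoidAlgebra.mapDomain (⇑D) p = AddMonoidAlgebra.mapDomain (Th ∘ ⇑Dh) p := by rw [hc]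
      _ = AddMonoidAlgebra.mapDomain Th (AddMonoidAlgebra.mapDomain (⇑Dh) p) := by
          exact congrArg AddMonoidAlgebra.ofCoeff Finsupp.mapDomain_comp
      _ = 0 := by rw [h, AddMonoidAlgebra.mapDomain_zero]
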